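/- An action a_i is counterfactually rationalizable with respect to an action subspace A' if and only if it is not absolutely dominated in A': there is no action b_i with min_{a_{-i} ∈ A'_{-i}} u_i(b_i, a_{-i}) > max_{a_{-i} ∈ A'_{-i}} u_i(a_i, a_{-i}). -/
import Mathlib


open Finset

/-- An action `a1s` is counterfactually rationalizable with respect to a (nonempty)
action subspace `A1 × A2'` — i.e. a best response to some counterfactual belief
`λ : A1 → Δ(A2')` — iff no action `b1` absolutely dominates it in `A2'`:
`min_{a2 ∈ A2'} u1 b1 a2 > max_{a2 ∈ A2'} u1 a1s a2`. -/
theorem stmt7 {A1 A2 : Type} [Fintype A1]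
    (u1 : A1 → A2 → ℝ) (A2' : Finset A2) (h2 : A2'.Nonempty) (a1s : A1) :
    (∃ lam : A1 → A2 → ℝ,
      (∀ a1 a2, 0 ≤ lam a1 a2) ∧ (∀ a1, ∑ a2 ∈ A2', lam a1 a2 = 1) ∧
      (∀ a1, ∑ a2 ∈ A2', u1 a1 a2 * lam a1 a2 ≤ ∑ a2 ∈ A2', u1 a1s a2 * lam a1s a2))
    ↔ ¬ ∃ b1 : A1, A2'.sup' h2 (fun a2 => u1 a1s a2) < A2'.inf' h2 (fun a2 => u1 b1 a2) := by
  classical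
  constructor
  · rintro ⟨lam, hpos, hsum, hbest⟩ ⟨b1, hb⟩
    have h1 : ∑ a2 ∈ A2', u1 a1s a2 * lam a1s a2
        ≤ A2'.sup' h2 (fun a2 => u1 a1s a2) := by
      calc ∑ a2 ∈ A2', u1 a1s a2 * lam a1s a2
          ≤ ∑ a2 ∈ A2', A2'.sup' h2 (fun a2 => u1 a1s a2) * lam a1s a2 := by
            apply Finset.sum_le_sum
            intro a2 ha2
            exact mul_le_mul_of_nonneg_right (Finset.le_sup' _ ha2) (hpos _ _)
        _ = A2'.sup' h2 (fun a2 => u1 a1s a2) := by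
            rw [← Finset.mul_sum, hsum, mul_one]
    have h3 : A2'.inf' h2 (fun a2 => u1 b1 a2)
        ≤ ∑ a2 ∈ A2', u1 b1 a2 * lam b1 a2 := by
      calc A2'.inf' h2 (fun a2 => u1 b1 a2)
          = ∑ a2 ∈ A2', A2'.inf' h2 (fun a2 => u1 b1 a2) * lam b1 a2 := by
            rw [← Finset.mul_sum, hsum, mul_one]
        _ ≤ ∑ a2 ∈ A2', u1 b1 a2 * lam b1 a2 := by
            apply Finset.sum_le_sum
            intro a2 ha2
            exact mul_le_mul_of_nonneg_right (Finset.inf'_le _ ha2) (hpos _ _)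
    have := le_trans h3 (le_trans (hbest b1) h1)
    exact absurd hb (not_lt.mpr this)
  · intro hnd
    -- for each a1 choose a point: for a1s the argmax, otherwise the argmin
    have hmax := Finset.exists_mem_eq_sup' h2 (fun a2 => u1 a1s a2)
    obtain ⟨cmax, hcmax, hmaxeq⟩ := hmax
    choose cmin hcmin hmineq using fun a1 =>
      Finset.exists_mem_eq_inf' h2 (fun a2 => u1 a1 a2)
    set c : A1 → A2 := fun a1 => if a1 = a1s then cmax else cmin a1 with hc
    have hcmem : ∀ a1, c a1 ∈ A2' := by
      intro a1
      by_cases h : a1 = a1s <;> simp [hc, h, hcmax, hcmin]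
    refine ⟨fun a1 a2 => if a2 = c a1 then 1 else 0, ?_, ?_, ?_⟩
    · intro a1 a2; dsimp only; split <;> norm_num
    · intro a1
      rw [Finset.sum_ite_eq' A2' (c a1) (fun _ => (1 : ℝ))]
      simp [hcmem a1]
    · intro a1
      have key : ∀ b1, (∑ a2 ∈ A2', u1 b1 a2 * if a2 = c b1 then 1 else 0)
          = u1 b1 (c b1) := by
        intro b1
        rw [Finset.sum_eq_single (c b1)]
        · simp
        · intro b hb hbne; simp [hbne]
        · intro h; exact absurd (hcmem b1) h
      rw [key, key]
      have hca1s : c a1s = cmax := by simp [hc]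
      rw [hca1s]
      by_cases h : a1 = a1s
      · rw [h, hca1s]
      · have hca1 : c a1 = cmin a1 := by simp [hc, h]
        rw [hca1]
        have h1 : u1 a1 (cmin a1) = A2'.inf' h2 (fun a2 => u1 a1 a2) :=
          (hmineq a1).symm
        have h2' : u1 a1s cmax = A2'.sup' h2 (fun a2 => u1 a1s a2) := hmaxeq.symm
        rw [h1, h2']
        push_neg at hnd
        exact hnd a1
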